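/- Let γ > 1, p(s) = s^γ, P(ρ) = (ρ^γ - ρ)/(γ-1). For any 0 < a ≤ b there exists c > 0 such that for all r ∈ [a,b] and all ρ ≥ 0 with ρ ≥ 2b or ρ ≤ a/2, one has P(ρ) - P(r) - P'(r)(ρ - r) ≥ c(1 + ρ^γ). -/

import Mathlib

set_option maxHeartbeats 1000000
open Real Set

lemma anti_phi {γ : ℝ} (hγ : 1 < γ) {t : ℝ} (ht0 : 0 ≤ t) (ht : t ≤ 1/2) :
    1 + (γ-1)*(1/2:ℝ)^γ - γ*(1/2:ℝ)^(γ-1) ≤ 1 + (γ-1)*t^γ - γ*t^(γ-1) := by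
  have hγ0 : (0:ℝ) ≤ γ := by linarith
  have hγ1 : (0:ℝ) ≤ γ - 1 := by linarith
  have hanti : StrictAntiOn (fun t : ℝ => 1 + (γ-1)*t^γ - γ*t^(γ-1)) (Icc 0 (1/2)) := by
    apply strictAntiOn_of_deriv_neg (convex_Icc 0 (1/2))
    · have c1 : ContinuousOn (fun t : ℝ => t ^ γ) (Icc 0 (1/2)) := fun x _ =>
        (Real.continuousAt_rpow_const x γ (Or.inr hγ0)).continuousWithinAt
      have c2 : ContinuousOn (fun t : ℝ => t ^ (γ-1)) (Icc 0 (1/2)) := fun x _ =>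
        (Real.continuousAt_rpow_const x (γ-1) (Or.inr hγ1)).continuousWithinAt
      exact (continuousOn_const.add (continuousOn_const.mul c1)).sub (continuousOn_const.mul c2)
    · intro x hx
      rw [interior_Icc] at hx
      obtain ⟨hx0, hx1⟩ := hx
      have h1 : HasDerivAt (fun t : ℝ => t^γ) (γ * x^(γ-1)) x :=
        Real.hasDerivAt_rpow_const (Or.inl hx0.ne')
      have h2 : HasDerivAt (fun t : ℝ => t^(γ-1)) ((γ-1) * x^(γ-1-1)) x :=
        Real.hasDerivAt_rpow_const (Or.inl hx0.ne')
      have hD : HasDerivAt (fun t : ℝ => 1 + (γ-1)*t^γ - γ*t^(γ-1))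
          (0 + (γ - 1) * (γ * x ^ (γ - 1)) - γ * ((γ - 1) * x ^ (γ - 1 - 1))) x :=
        ((hasDerivAt_const x (1:ℝ)).add (h1.const_mul (γ-1))).sub (h2.const_mul γ)
      rw [hD.deriv]
      have hsplit : x^(γ-1) = x^(γ-1-1) * x := by
        rw [← Real.rpow_add_one hx0.ne' (γ-1-1)]; ring_nf
      have hxp : 0 < x^(γ-1-1) := Real.rpow_pos_of_pos hx0 _
      rw [hsplit]
      nlinarith [mul_pos (mul_pos (by linarith : (0:ℝ) < γ-1) (by linarith : (0:ℝ) < γ))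
        (mul_pos hxp (by linarith : (0:ℝ) < 1-x))]
  exact hanti.antitoneOn ⟨ht0, ht⟩ ⟨by norm_num, le_refl _⟩ ht

lemma anti_psi {γ : ℝ} (hγ : 1 < γ) {s : ℝ} (hs0 : 0 ≤ s) (hs : s ≤ 1/2) :
    (1/2:ℝ)^γ - γ*(1/2) + (γ-1) ≤ s^γ - γ*s + (γ-1) := by
  have hγ0 : (0:ℝ) ≤ γ := by linarith
  have hanti : StrictAntiOn (fun s : ℝ => s^γ - γ*s + (γ-1)) (Icc 0 (1/2)) := by
    apply strictAntiOn_of_deriv_neg (convex_Icc 0 (1/2))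
    · have c1 : ContinuousOn (fun t : ℝ => t ^ γ) (Icc 0 (1/2)) := fun x _ =>
        (Real.continuousAt_rpow_const x γ (Or.inr hγ0)).continuousWithinAt
      exact (c1.sub (continuousOn_const.mul continuousOn_id)).add continuousOn_const
    · intro x hx
      rw [interior_Icc] at hx
      obtain ⟨hx0, hx1⟩ := hx
      have h1 : HasDerivAt (fun t : ℝ => t^γ) (γ * x^(γ-1)) x :=
        Real.hasDerivAt_rpow_const (Or.inl hx0.ne')
      have hD : HasDerivAt (fun t : ℝ => t^γ - γ*t + (γ-1)) (γ * x^(γ-1) - γ*1) x :=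
        (h1.sub ((hasDerivAt_id x).const_mul γ)).add_const (γ-1)
      rw [hD.deriv]
      have hlt : x^(γ-1) < 1 := by
        calc x^(γ-1) < 1^(γ-1) := by
              apply Real.rpow_lt_rpow hx0.le (by linarith) (by linarith)
          _ = 1 := Real.one_rpow _
      nlinarith
  exact hanti.antitoneOn ⟨hs0, hs⟩ ⟨by norm_num, le_refl _⟩ hs

lemma pos_delta1 {γ : ℝ} (hγ : 1 < γ) : 0 < 1 + (γ-1)*(1/2:ℝ)^γ - γ*(1/2:ℝ)^(γ-1) := by
  have h2 : (γ+1) < (2:ℝ)^γ := by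
    have e1 : (2:ℝ)^γ = 2 * 2^(γ-1) := by
      rw [show γ = 1 + (γ-1) by ring, Real.rpow_add two_pos, Real.rpow_one]
      norm_num
    have e2 : (2:ℝ)^(γ-1) = Real.exp (Real.log 2 * (γ-1)) := Real.rpow_def_of_pos two_pos _
    have e3 : Real.log 2 * (γ-1) + 1 ≤ Real.exp (Real.log 2 * (γ-1)) := Real.add_one_le_exp _
    have hl : (0.6931471803:ℝ) < Real.log 2 := Real.log_two_gt_d9
    nlinarith
  have hhalf : (1/2:ℝ)^γ = 1 / (2:ℝ)^γ := by
    rw [Real.div_rpow zero_le_one (by norm_num), Real.one_rpow]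
  have hhalf1 : (1/2:ℝ)^(γ-1) = 2 * (1/2:ℝ)^γ := by
    rw [show γ = (γ-1) + 1 by ring, Real.rpow_add_one (by norm_num : (1/2:ℝ) ≠ 0)]
    ring_nf
  have hp : (0:ℝ) < (2:ℝ)^γ := Real.rpow_pos_of_pos two_pos _
  rw [hhalf1, hhalf]
  rw [div_eq_inv_mul]
  have : (γ+1) * ((2:ℝ)^γ)⁻¹ < 1 := by
    rw [← div_eq_mul_inv, div_lt_one hp]; exact h2
  nlinarith [this]

lemma pos_delta2 {γ : ℝ} (hγ : 1 < γ) : 0 < (1/2:ℝ)^γ - γ*(1/2) + (γ-1) := by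
  have e1 : (1/2:ℝ)^γ = (1/2) * (1/2:ℝ)^(γ-1) := by
    rw [show γ = (γ-1) + 1 by ring, Real.rpow_add_one (by norm_num : (1/2:ℝ) ≠ 0)]
    ring_nf
  have e2 : (1/2:ℝ)^(γ-1) = Real.exp (Real.log (1/2) * (γ-1)) := Real.rpow_def_of_pos (by norm_num) _
  have e3 : Real.log (1/2:ℝ) = - Real.log 2 := by
    rw [one_div, Real.log_inv]
  have e4 : (-Real.log 2) * (γ-1) + 1 ≤ Real.exp ((-Real.log 2) * (γ-1)) := Real.add_one_le_exp _
  have hl : Real.log 2 < 0.6931471808 := Real.log_two_lt_d9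
  rw [e1, e2, e3]
  nlinarith [e4]

theorem stmt_4 (γ : ℝ) (hγ : 1 < γ)
    (P : ℝ → ℝ) (hP : ∀ ρ : ℝ, P ρ = (ρ ^ γ - ρ) / (γ - 1))
    (a b : ℝ) (ha : 0 < a) (hab : a ≤ b) :
    ∃ c : ℝ, 0 < c ∧ ∀ r ∈ Set.Icc a b, ∀ ρ : ℝ, 0 ≤ ρ →
      (2 * b ≤ ρ ∨ ρ ≤ a / 2) →
      c * (1 + ρ ^ γ) ≤ P ρ - P r - deriv P r * (ρ - r) := by
  have hγ1 : (0:ℝ) < γ - 1 := by linarith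
  have hb : (0:ℝ) < b := lt_of_lt_of_le ha hab
  have h2b : (0:ℝ) < 2*b := by linarith
  set δ₁ : ℝ := 1 + (γ-1)*(1/2:ℝ)^γ - γ*(1/2:ℝ)^(γ-1) with hδ₁
  set δ₂ : ℝ := (1/2:ℝ)^γ - γ*(1/2) + (γ-1) with hδ₂
  have hδ₁pos : 0 < δ₁ := pos_delta1 hγ
  have hδ₂pos : 0 < δ₂ := pos_delta2 hγ
  have h2bγ : (0:ℝ) < (2*b)^γ := Real.rpow_pos_of_pos h2b _
  have haγ : (0:ℝ) < a^γ := Real.rpow_pos_of_pos ha _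
  have ha2γ : (0:ℝ) < (a/2)^γ := Real.rpow_pos_of_pos (by linarith) _
  set K1 : ℝ := δ₁*(2*b)^γ/(1+(2*b)^γ) with hK1
  set K2 : ℝ := δ₂*a^γ/(1+(a/2)^γ) with hK2
  have hK1pos : 0 < K1 := div_pos (mul_pos hδ₁pos h2bγ) (by linarith)
  have hK2pos : 0 < K2 := div_pos (mul_pos hδ₂pos haγ) (by linarith)
  refine ⟨min K1 K2 / (γ-1), div_pos (lt_min hK1pos hK2pos) hγ1, ?_⟩
  intro r hr ρ hρ0 hcase
  have hr0 : 0 < r := lt_of_lt_of_le ha hr.1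
  have hPfun : P = fun s : ℝ => (s^γ - s)/(γ-1) := funext hP
  have hD : HasDerivAt (fun s : ℝ => (s^γ - s)/(γ-1)) ((γ*r^(γ-1) - 1)/(γ-1)) r := by
    have h1 : HasDerivAt (fun s : ℝ => s^γ) (γ * r^(γ-1)) r :=
      Real.hasDerivAt_rpow_const (Or.inl hr0.ne')
    exact (h1.sub (hasDerivAt_id r)).div_const (γ-1)
  rw [hPfun]
  rw [hD.deriv]
  simp only
  have hrr : r^(γ-1)*r = r^γ := by
    rw [← Real.rpow_add_one hr0.ne']; ring_nf
  have key : (ρ^γ - ρ)/(γ-1) - (r^γ - r)/(γ-1) - (γ*r^(γ-1) - 1)/(γ-1)*(ρ-r)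
      = (ρ^γ + (γ-1)*r^γ - γ*(r^(γ-1)*ρ))/(γ-1) := by
    field_simp
    linear_combination γ * hrr
  rw [key, div_mul_eq_mul_div, div_le_div_iff₀ hγ1 hγ1]
  have main : min K1 K2 * (1+ρ^γ) ≤ ρ^γ + (γ-1)*r^γ - γ*(r^(γ-1)*ρ) := by
    rcases hcase with hbig | hsmall
    · -- large ρ
      have hρpos : 0 < ρ := lt_of_lt_of_le h2b hbig
      have ht0 : (0:ℝ) ≤ r/ρ := by positivity
      have ht : r/ρ ≤ 1/2 := by
        rw [div_le_div_iff₀ hρpos (by norm_num : (0:ℝ) < 2)]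
        nlinarith [hr.2]
      have hφ := anti_phi hγ ht0 ht
      have hργ : (0:ℝ) < ρ^γ := Real.rpow_pos_of_pos hρpos _
      have hργ1 : (0:ℝ) < ρ^(γ-1) := Real.rpow_pos_of_pos hρpos _
      have hhom : ρ^γ * (1 + (γ-1)*(r/ρ)^γ - γ*(r/ρ)^(γ-1))
          = ρ^γ + (γ-1)*r^γ - γ*(r^(γ-1)*ρ) := by
        rw [Real.div_rpow hr0.le hρpos.le, Real.div_rpow hr0.le hρpos.le]
        have hρρ : ρ^(γ-1)*ρ = ρ^γ := by
          rw [← Real.rpow_add_one hρpos.ne']; ring_nf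
        field_simp
        linear_combination γ * r^(γ-1) * hρρ
      have hF : δ₁ * ρ^γ ≤ ρ^γ + (γ-1)*r^γ - γ*(r^(γ-1)*ρ) := by
        rw [← hhom]
        have h := mul_le_mul_of_nonneg_left hφ hργ.le
        calc δ₁ * ρ^γ = ρ^γ * (1 + (γ-1)*(1/2:ℝ)^γ - γ*(1/2:ℝ)^(γ-1)) := by rw [hδ₁]; ring
          _ ≤ _ := h
      have hmono : (2*b)^γ ≤ ρ^γ := Real.rpow_le_rpow h2b.le hbig (by linarith)
      have h1ρ : K1 * (1+ρ^γ) ≤ δ₁ * ρ^γ := by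
        rw [hK1, div_mul_eq_mul_div, div_le_iff₀ (by linarith : (0:ℝ) < 1+(2*b)^γ)]
        nlinarith [hmono, hδ₁pos, h2bγ, hργ]
      calc min K1 K2 * (1+ρ^γ) ≤ K1 * (1+ρ^γ) := by
            apply mul_le_mul_of_nonneg_right (min_le_left _ _)
            positivity
        _ ≤ δ₁ * ρ^γ := h1ρ
        _ ≤ _ := hF
    · -- small ρ
      have hs0 : (0:ℝ) ≤ ρ/r := by positivity
      have hs : ρ/r ≤ 1/2 := by
        rw [div_le_div_iff₀ hr0 (by norm_num : (0:ℝ) < 2)]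
        nlinarith [hr.1]
      have hψ := anti_psi hγ hs0 hs
      have hrγ : (0:ℝ) < r^γ := Real.rpow_pos_of_pos hr0 _
      have hhom : r^γ * ((ρ/r)^γ - γ*(ρ/r) + (γ-1))
          = ρ^γ + (γ-1)*r^γ - γ*(r^(γ-1)*ρ) := by
        rw [Real.div_rpow hρ0 hr0.le]
        field_simp
        linear_combination γ * ρ * hrr
      have hF : δ₂ * r^γ ≤ ρ^γ + (γ-1)*r^γ - γ*(r^(γ-1)*ρ) := by
        rw [← hhom]
        have h := mul_le_mul_of_nonneg_left hψ hrγ.le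
        calc δ₂ * r^γ = r^γ * ((1/2:ℝ)^γ - γ*(1/2) + (γ-1)) := by rw [hδ₂]; ring
          _ ≤ _ := h
      have harγ : a^γ ≤ r^γ := Real.rpow_le_rpow ha.le hr.1 (by linarith)
      have hρa : ρ^γ ≤ (a/2)^γ := Real.rpow_le_rpow hρ0 hsmall (by linarith)
      have h2ρ : K2 * (1+ρ^γ) ≤ δ₂ * a^γ := by
        rw [hK2, div_mul_eq_mul_div, div_le_iff₀ (by linarith : (0:ℝ) < 1+(a/2)^γ)]
        have h := mul_le_mul_of_nonneg_left hρa (mul_pos hδ₂pos haγ).le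
        nlinarith [h]
      calc min K1 K2 * (1+ρ^γ) ≤ K2 * (1+ρ^γ) := by
            apply mul_le_mul_of_nonneg_right (min_le_right _ _)
            have : (0:ℝ) ≤ ρ^γ := Real.rpow_nonneg hρ0 _
            linarith
        _ ≤ δ₂ * a^γ := h2ρ
        _ ≤ δ₂ * r^γ := by nlinarith
        _ ≤ _ := hF
  exact mul_le_mul_of_nonneg_right main hγ1.le
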